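/- Let β : ℝ → ℝ be C² convex with |β'| ≤ 1 and |β''| bounded, and let f : ℝ → ℝ be Lipschitz with constant L_f. Define F^β(a,b) := ∫_b^a β'(r - b) f'(r) dr. Then there exists a constant C (depending only on L_f and bounds on β) such that for all a, b, c ∈ ℝ: |F^β(a,b) - F^β(a,c)| ≤ C |b - c| (1 + |a - b|). -/

import Mathlib

open MeasureTheory intervalIntegral

theorem stmt5 (β : ℝ → ℝ) (hβ : ContDiff ℝ 2 β)
    (hconv : ConvexOn ℝ Set.univ β) (hβ' : ∀ r, |deriv β r| ≤ 1)
    (Mβ : ℝ) (hβ'' : ∀ r, |deriv (deriv β) r| ≤ Mβ)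
    (L_f : ℝ) (f : ℝ → ℝ) (hf : Differentiable ℝ f)
    (hlip : ∀ x y : ℝ, |f x - f y| ≤ L_f * |x - y|)
    (hf' : ∀ r, |deriv f r| ≤ L_f)
    (Fβ : ℝ → ℝ → ℝ)
    (hFβ : ∀ a b, Fβ a b = ∫ r in b..a, deriv β (r - b) * deriv f r) :
    ∃ C : ℝ, 0 ≤ C ∧ ∀ a b c : ℝ, |Fβ a b - Fβ a c| ≤ C * |b - c| * (1 + |a - b|) := by
  have hLf : 0 ≤ L_f := le_trans (abs_nonneg _) (hf' 0)
  have hMβ : 0 ≤ Mβ := le_trans (abs_nonneg _) (hβ'' 0)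
  have h1 : ContDiff ℝ 1 (deriv β) := by
    have := (contDiff_succ_iff_deriv.mp (show ContDiff ℝ (1 + 1) β from by
      exact_mod_cast hβ)).2.2
    exact_mod_cast this
  have hβcont : Continuous (deriv β) := h1.continuous
  have hβdiff : Differentiable ℝ (deriv β) := h1.differentiable one_ne_zero
  -- Lipschitz bound for deriv β
  have hlipβ : ∀ x y : ℝ, |deriv β x - deriv β y| ≤ Mβ * |x - y| := by
    intro x y
    have := lipschitzWith_of_nnnorm_deriv_le (C := Mβ.toNNReal) hβdiff (fun z => by
      rw [← NNReal.coe_le_coe, coe_nnnorm, Real.coe_toNNReal _ hMβ, Real.norm_eq_abs]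
      exact hβ'' z)
    have h := this.dist_le_mul x y
    rwa [Real.dist_eq, Real.dist_eq, Real.coe_toNNReal _ hMβ] at h
  -- interval integrability
  have hint : ∀ d p q : ℝ, IntervalIntegrable
      (fun r => deriv β (r - d) * deriv f r) volume p q := by
    intro d p q
    have hm : AEStronglyMeasurable (fun r => deriv β (r - d) * deriv f r)
        (volume.restrict (Set.uIoc p q)) := by
      exact ((hβcont.comp (continuous_id.sub continuous_const)).aestronglyMeasurable.mul
        (measurable_deriv f).aestronglyMeasurable).restrict
    apply (_root_.intervalIntegrable_const (c := L_f)).mono_fun hm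
    filter_upwards with x
    rw [Real.norm_eq_abs, Real.norm_eq_abs, abs_mul, abs_of_nonneg hLf]
    calc |deriv β (x - d)| * |deriv f x| ≤ 1 * L_f :=
          mul_le_mul (hβ' _) (hf' _) (abs_nonneg _) zero_le_one
      _ = L_f := one_mul _
  have hintd : ∀ b c p q : ℝ, IntervalIntegrable
      (fun r => (deriv β (r - b) - deriv β (r - c)) * deriv f r) volume p q := by
    intro b c p q
    have := (hint b p q).sub (hint c p q)
    simpa [sub_mul] using this
  refine ⟨L_f * (1 + Mβ), by positivity, fun a b c => ?_⟩
  rw [hFβ, hFβ]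
  set I1 := ∫ r in b..a, (deriv β (r - b) - deriv β (r - c)) * deriv f r with hI1
  set I2 := ∫ r in b..c, deriv β (r - c) * deriv f r with hI2
  have hsplit : (∫ r in b..a, deriv β (r - b) * deriv f r)
      - (∫ r in c..a, deriv β (r - c) * deriv f r) = I1 + I2 := by
    have e1 : I1 = (∫ r in b..a, deriv β (r - b) * deriv f r)
        - (∫ r in b..a, deriv β (r - c) * deriv f r) := by
      rw [hI1, ← intervalIntegral.integral_sub (hint b b a) (hint c b a)]
      simp [sub_mul]
    have e2 : I2 + (∫ r in c..a, deriv β (r - c) * deriv f r)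
        = ∫ r in b..a, deriv β (r - c) * deriv f r :=
      intervalIntegral.integral_add_adjacent_intervals (hint c b c) (hint c c a)
    linarith
  rw [hsplit]
  have hb1 : |I1| ≤ Mβ * |b - c| * L_f * |a - b| := by
    have := intervalIntegral.norm_integral_le_of_norm_le_const
      (C := Mβ * |b - c| * L_f) (a := b) (b := a)
      (f := fun r => (deriv β (r - b) - deriv β (r - c)) * deriv f r) ?_
    · rw [Real.norm_eq_abs] at this
      calc |I1| ≤ Mβ * |b - c| * L_f * |a - b| := this
        _ = Mβ * |b - c| * L_f * |a - b| := rfl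
    · intro x _
      rw [Real.norm_eq_abs, abs_mul]
      have h1' : |deriv β (x - b) - deriv β (x - c)| ≤ Mβ * |b - c| := by
        have := hlipβ (x - b) (x - c)
        have he : |(x - b) - (x - c)| = |b - c| := by
          rw [show (x - b) - (x - c) = -(b - c) by ring, abs_neg]
        rwa [he] at this
      exact mul_le_mul h1' (hf' x) (abs_nonneg _) (by positivity)
  have hb2 : |I2| ≤ L_f * |b - c| := by
    have := intervalIntegral.norm_integral_le_of_norm_le_const
      (C := L_f) (a := b) (b := c)
      (f := fun r => deriv β (r - c) * deriv f r) ?_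
    · rw [Real.norm_eq_abs] at this
      calc |I2| ≤ L_f * |c - b| := this
        _ = L_f * |b - c| := by rw [abs_sub_comm]
    · intro x _
      rw [Real.norm_eq_abs, abs_mul]
      calc |deriv β (x - c)| * |deriv f x| ≤ 1 * L_f :=
            mul_le_mul (hβ' _) (hf' _) (abs_nonneg _) zero_le_one
        _ = L_f := one_mul _
  calc |I1 + I2| ≤ |I1| + |I2| := abs_add_le _ _
    _ ≤ Mβ * |b - c| * L_f * |a - b| + L_f * |b - c| := add_le_add hb1 hb2
    _ ≤ L_f * (1 + Mβ) * |b - c| * (1 + |a - b|) := by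
        have h1 : (0:ℝ) ≤ |b - c| := abs_nonneg _
        have h2 : (0:ℝ) ≤ |a - b| := abs_nonneg _
        nlinarith [mul_nonneg hLf h1, mul_nonneg (mul_nonneg hMβ h1) hLf,
          mul_nonneg (mul_nonneg hLf h1) h2]
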